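/- Let γ < 0 be a real eigenvalue of A with unit eigenvector u, and V = I_d. For X := (u, -u, …, -u) ∈ (ℝ^d)^n and any R > 0, ‖D_{RX} f‖₂ ≥ √(n-1) / (1 + (n-1) e^{-2R²|γ|}). -/

import Mathlib

open Matrix

/-- Self-attention (with `V = I`) as a map between sequence spaces with the Frobenius norm. -/
noncomputable def attnF (n d : ℕ) (A : Matrix (Fin d) (Fin d) ℝ) :
    PiLp 2 (fun _ : Fin n => EuclideanSpace ℝ (Fin d)) →
      PiLp 2 (fun _ : Fin n => EuclideanSpace ℝ (Fin d)) :=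
  fun x => WithLp.toLp 2 fun i => ∑ j, (Real.exp ((x i) ⬝ᵥ (Aᵀ.mulVec (x j))) /
      ∑ l, Real.exp ((x i) ⬝ᵥ (Aᵀ.mulVec (x l)))) • x j

variable {n d : ℕ}

lemma score_diff (A : Matrix (Fin d) (Fin d) ℝ) (i j : Fin n) :
    Differentiable ℝ (fun x : PiLp 2 (fun _ : Fin n => EuclideanSpace ℝ (Fin d)) =>
      (x i) ⬝ᵥ (Aᵀ.mulVec (x j))) := by
  simp only [dotProduct, Matrix.mulVec]
  apply Differentiable.fun_sum
  intro k _
  apply Differentiable.mul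
  · exact ((EuclideanSpace.proj k).comp
      ((PiLp.proj 2 (fun _ : Fin n => EuclideanSpace ℝ (Fin d)) i))).differentiable
  · apply Differentiable.fun_sum
    intro m _
    exact (differentiable_const _).mul (((EuclideanSpace.proj m).comp
      ((PiLp.proj 2 (fun _ : Fin n => EuclideanSpace ℝ (Fin d)) j))).differentiable)

lemma attnF_diff (hn : 0 < n) (A : Matrix (Fin d) (Fin d) ℝ) :
    Differentiable ℝ (attnF n d A) := by
  have hZ : ∀ (x : PiLp 2 (fun _ : Fin n => EuclideanSpace ℝ (Fin d))) (i : Fin n),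
      (∑ l, Real.exp ((x i) ⬝ᵥ (Aᵀ.mulVec (x l)))) ≠ 0 := by
    intro x i
    have : (0:ℝ) < ∑ l, Real.exp ((x i) ⬝ᵥ (Aᵀ.mulVec (x l))) :=
      Finset.sum_pos (fun l _ => Real.exp_pos _)
        (by simp [Finset.univ_nonempty_iff, Fin.pos_iff_nonempty.mp hn])
    exact this.ne'
  have : Differentiable ℝ (fun x : PiLp 2 (fun _ : Fin n => EuclideanSpace ℝ (Fin d)) =>
      (fun i => ∑ j, (Real.exp ((x i) ⬝ᵥ (Aᵀ.mulVec (x j))) /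
      ∑ l, Real.exp ((x i) ⬝ᵥ (Aᵀ.mulVec (x l)))) • x j : ∀ _ : Fin n, EuclideanSpace ℝ (Fin d))) := by
    rw [differentiable_pi]
    intro i
    apply Differentiable.fun_sum
    intro j _
    apply Differentiable.fun_smul
    · simp only [div_eq_mul_inv]
      exact ((score_diff A i j).exp).mul
        ((Differentiable.fun_sum (fun l _ => (score_diff A i l).exp)).inv (fun x => hZ x i))
    · exact (PiLp.proj (𝕜 := ℝ) 2 (fun _ : Fin n => EuclideanSpace ℝ (Fin d)) j).differentiable
  exact ((PiLp.continuousLinearEquiv 2 ℝ _).symm.differentiable.comp this :)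


private lemma scalar_LHS_eq (m : ℕ) (R γ : ℝ) (hγ : γ < 0) :
    Real.sqrt (m : ℝ) / (1 + (m : ℝ) * Real.exp (-2 * R ^ 2 * -γ)) =
      Real.sqrt (m : ℝ) * (Real.exp (-(R * γ) * (R + 0)) /
        (Real.exp (-(R * γ) * (R + 0)) + (m : ℝ) * Real.exp (R ^ 2 * γ))) := by
  have hexp : Real.exp (-(R * γ) * (R + 0)) * Real.exp (-2 * R ^ 2 * -γ) =
      Real.exp (R ^ 2 * γ) := by
    rw [← Real.exp_add]; ring_nf
  have h1 : (0:ℝ) < 1 + (m : ℝ) * Real.exp (-2 * R ^ 2 * -γ) := by positivity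
  have h2 : (0:ℝ) < Real.exp (-(R * γ) * (R + 0)) + (m : ℝ) * Real.exp (R ^ 2 * γ) := by
    positivity
  rw [mul_div_assoc', div_eq_div_iff h1.ne' h2.ne']
  linear_combination (-(Real.sqrt (m : ℝ) * (m : ℝ))) * hexp

/-- lower bound on the Jacobian norm of self-attention at
`R·(u, -u, …, -u)` for a negative eigenvalue `γ` of `A` with unit eigenvector `u`. -/
theorem attn_jacobian_lower_bound_neg_eigenvalue {n d : ℕ} (hn : 0 < n)
    (A : Matrix (Fin d) (Fin d) ℝ) (γ : ℝ) (hγ : γ < 0)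
    (u : EuclideanSpace ℝ (Fin d)) (hu : ‖u‖ = 1) (hAu : A.mulVec u = γ • u)
    (R : ℝ) (hR : 0 < R)
    (X : PiLp 2 (fun _ : Fin n => EuclideanSpace ℝ (Fin d)))
    (hX : X = fun i : Fin n => if i.val = 0 then u else -u) :
    Real.sqrt ((n : ℝ) - 1) / (1 + ((n : ℝ) - 1) * Real.exp (-2 * R ^ 2 * |γ|)) ≤
      ‖fderiv ℝ (attnF n d A) (R • X)‖ := by
  obtain ⟨m, rfl⟩ : ∃ m, n = m + 1 := ⟨n - 1, (Nat.succ_pred_eq_of_pos hn).symm⟩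
  obtain rfl : X = WithLp.toLp 2 (fun i : Fin (m+1) => if i.val = 0 then u else -u) := by
    rw [← hX]
  -- basic dot product facts
  have hu2 : u ⬝ᵥ u = 1 := by
    have h := congrArg (· ^ 2) (hu.trans (Real.sqrt_one).symm)
    rw [EuclideanSpace.norm_eq] at h
    simp only [Real.sq_sqrt (Finset.sum_nonneg (fun i _ => sq_nonneg _)),
      Real.sq_sqrt zero_le_one] at h
    simpa [dotProduct, sq] using h
  have hdot : ∀ c c' : ℝ, ((c • u : EuclideanSpace ℝ (Fin d)) ⬝ᵥ
      (Aᵀ.mulVec (c' • u : EuclideanSpace ℝ (Fin d)))) = c * c' * γ := by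
    intro c c'
    rw [Matrix.dotProduct_mulVec, Matrix.vecMul_transpose]
    have : A.mulVec (c • u : EuclideanSpace ℝ (Fin d)) = (c * γ) • (u : Fin d → ℝ) := by
      show A.mulVec (c • (u : Fin d → ℝ)) = (c * γ) • (u : Fin d → ℝ)
      rw [Matrix.mulVec_smul, hAu, smul_smul]
    rw [this]
    show ((c * γ) • (u : Fin d → ℝ)) ⬝ᵥ (c' • (u : Fin d → ℝ)) = c * c' * γ
    rw [smul_dotProduct, dotProduct_smul, hu2]
    simp [smul_eq_mul]; ring
  -- the point and direction
  set p : PiLp 2 (fun _ : Fin (m+1) => EuclideanSpace ℝ (Fin d)) :=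
    R • WithLp.toLp 2 (fun i : Fin (m+1) => if i.val = 0 then u else -u) with hp
  set H : PiLp 2 (fun _ : Fin (m+1) => EuclideanSpace ℝ (Fin d)) :=
    WithLp.toLp 2 (fun i : Fin (m+1) => if i.val = 0 then u else 0) with hHdef
  have hy : ∀ (t : ℝ) (j : Fin (m+1)),
      (p + t • H) j = (if j.val = 0 then ((R + t) • u : EuclideanSpace ℝ (Fin d))
        else ((-R) • u : EuclideanSpace ℝ (Fin d))) := by
    intro t j
    by_cases hj : j.val = 0
    · simp [hp, hHdef, hj, Fin.val_eq_zero_iff.mp hj, add_smul]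
    · simp [hp, hHdef, hj, mt Fin.val_eq_zero_iff.mpr hj, smul_neg, neg_smul]
  -- key constants
  set K : ℝ := m * Real.exp (R ^ 2 * γ) with hK
  have hK0 : 0 ≤ K := by positivity
  have hZpos : ∀ t : ℝ, 0 < Real.exp (-(R * γ) * (R + t)) + K :=
    fun t => lt_of_lt_of_le (Real.exp_pos _) (le_add_of_nonneg_right hK0)
  set φ : ℝ → ℝ := fun t => ((R + t) * Real.exp (-(R * γ) * (R + t)) - R * K) /
    (Real.exp (-(R * γ) * (R + t)) + K) with hφdef
  -- component formula
  have hattn : ∀ (t : ℝ) (i : Fin (m+1)), i.val ≠ 0 →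
      attnF (m+1) d A (p + t • H) i = φ t • u := by
    intro t i hi
    have hs : ∀ j : Fin (m+1), ((p + t • H) i) ⬝ᵥ (Aᵀ.mulVec ((p + t • H) j)) =
        (if j.val = 0 then (-(R * γ)) * (R + t) else R ^ 2 * γ) := by
      intro j
      rw [hy t i, hy t j, if_neg hi]
      by_cases hj : j.val = 0
      · rw [if_pos hj, if_pos hj, hdot]; ring
      · rw [if_neg hj, if_neg hj, hdot]; ring
    have hZeq : (∑ l, Real.exp (((p + t • H) i) ⬝ᵥ (Aᵀ.mulVec ((p + t • H) l)))) =
        Real.exp (-(R * γ) * (R + t)) + K := by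
      simp only [hs]
      rw [Fin.sum_univ_succ]
      simp [hK, Fin.val_succ, mul_comm]
    show (∑ j, (Real.exp (((p + t • H) i) ⬝ᵥ (Aᵀ.mulVec ((p + t • H) j))) /
        ∑ l, Real.exp (((p + t • H) i) ⬝ᵥ (Aᵀ.mulVec ((p + t • H) l)))) • (p + t • H) j) = φ t • u
    rw [hZeq]
    simp only [hs]
    simp only [hy t]
    rw [Fin.sum_univ_succ]
    simp only [Fin.val_zero, if_true, Fin.val_succ, Nat.succ_ne_zero, if_false]
    rw [Finset.sum_const, Finset.card_univ, Fintype.card_fin, ← Nat.cast_smul_eq_nsmul ℝ]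
    rw [smul_smul, smul_smul, smul_smul, ← add_smul]
    congr 1
    have hne : Real.exp (-(R * γ) * (R + t)) + K ≠ 0 := (hZpos t).ne'
    simp only [hφdef]
    field_simp [hK]
    ring
  -- differentiability and derivative along the line
  have hdiffAt : DifferentiableAt ℝ (attnF (m+1) d A) p := (attnF_diff hn A).differentiableAt
  set D := fderiv ℝ (attnF (m+1) d A) p with hDdef
  haveI : ContinuousSMul ℝ (PiLp 2 (fun _ : Fin (m+1) => EuclideanSpace ℝ (Fin d))) := inferInstance
  have hline : HasDerivAt (fun t : ℝ => p + t • H) H 0 := by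
    simpa using ((hasDerivAt_id (0:ℝ)).smul_const H).const_add p
  have hFD' : HasFDerivAt (attnF (m+1) d A) D ((fun t : ℝ => p + t • H) 0) := by
    simpa using hdiffAt.hasFDerivAt
  have hcomp : HasDerivAt (fun t : ℝ => attnF (m+1) d A (p + t • H)) (D H) 0 :=
    HasFDerivAt.comp_hasDerivAt (l := attnF (m+1) d A) (0:ℝ) hFD' hline
  have hce : ∀ i : Fin (m+1),
      HasDerivAt (fun t : ℝ => attnF (m+1) d A (p + t • H) i) (D H i) 0 := by
    intro i
    exact (PiLp.proj (𝕜 := ℝ) 2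
      (fun _ : Fin (m+1) => EuclideanSpace ℝ (Fin d)) i).hasFDerivAt.comp_hasDerivAt 0 hcomp
  -- derivative of φ at 0 and its lower bound
  set P : ℝ := Real.exp (-(R * γ) * (R + 0)) / (Real.exp (-(R * γ) * (R + 0)) + K) with hPdef
  have hPpos : 0 < P := div_pos (Real.exp_pos _) (hZpos 0)
  obtain ⟨c, hφc, hPc⟩ : ∃ c, HasDerivAt φ c 0 ∧ P ≤ c := by
    have hlin : HasDerivAt (fun t : ℝ => R + t) 1 0 := by
      simpa using (hasDerivAt_id (0:ℝ)).const_add R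
    have harg : HasDerivAt (fun t : ℝ => -(R * γ) * (R + t)) (-(R * γ)) 0 := by
      simpa using hlin.const_mul (-(R * γ))
    have hExp : HasDerivAt (fun t : ℝ => Real.exp (-(R * γ) * (R + t)))
        (Real.exp (-(R * γ) * (R + 0)) * (-(R * γ))) 0 := harg.exp
    have hN : HasDerivAt (fun t : ℝ => (R + t) * Real.exp (-(R * γ) * (R + t)) - R * K)
        (1 * Real.exp (-(R * γ) * (R + 0)) +
          (R + 0) * (Real.exp (-(R * γ) * (R + 0)) * (-(R * γ)))) 0 :=
      (hlin.mul hExp).sub_const _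
    have hDen : HasDerivAt (fun t : ℝ => Real.exp (-(R * γ) * (R + t)) + K)
        (Real.exp (-(R * γ) * (R + 0)) * (-(R * γ))) 0 := hExp.add_const K
    refine ⟨_, hN.div hDen (hZpos 0).ne', ?_⟩
    rw [hPdef, div_le_div_iff₀ (hZpos 0) (by positivity)]
    have ha : 0 < R * (-γ) := mul_pos hR (neg_pos.mpr hγ)
    nlinarith [Real.exp_pos (-(R * γ) * (R + 0)), hK0, hZpos 0,
      mul_nonneg (mul_nonneg (mul_nonneg ha.le hK0) (Real.exp_pos (-(R * γ) * (R + 0))).le)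
        (hZpos 0).le]
  -- identify the components of D H
  have hDHi : ∀ i : Fin (m+1), i.val ≠ 0 → D H i = c • u := by
    intro i hi
    have hfun : (fun t : ℝ => attnF (m+1) d A (p + t • H) i) = fun t => φ t • u :=
      funext (fun t => hattn t i hi)
    have h1 : HasDerivAt (fun t : ℝ => φ t • u) (D H i) 0 := hfun ▸ hce i
    exact h1.unique (hφc.smul_const u)
  have hcnn : 0 ≤ c := le_trans hPpos.le hPc
  -- norm of H
  have hHnorm : ‖H‖ = 1 := by
    have h2 : ‖H‖ ^ 2 = 1 := by
      rw [PiLp.norm_sq_eq_of_L2, Fin.sum_univ_succ]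
      simp [hHdef, hu, Fin.val_succ]
    rw [← Real.sqrt_one, ← h2, Real.sqrt_sq (norm_nonneg H)]
  -- norm lower bound for D H
  have hDHnorm : Real.sqrt m * c ≤ ‖D H‖ := by
    have hsq : ‖D H‖ ^ 2 = ∑ i, ‖D H i‖ ^ 2 := PiLp.norm_sq_eq_of_L2 _ _
    have hlow : (m : ℝ) * c ^ 2 ≤ ‖D H‖ ^ 2 := by
      rw [hsq, Fin.sum_univ_succ]
      have : ∀ j : Fin m, ‖D H (Fin.succ j)‖ ^ 2 = c ^ 2 := by
        intro j
        rw [hDHi (Fin.succ j) (by simp [Fin.val_succ]), norm_smul, hu,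
          Real.norm_eq_abs, abs_of_nonneg hcnn, mul_one]
      rw [Finset.sum_congr rfl (fun j _ => this j), Finset.sum_const, Finset.card_univ,
        Fintype.card_fin, nsmul_eq_mul]
      nlinarith [sq_nonneg ‖D H 0‖]
    calc Real.sqrt m * c = Real.sqrt ((m : ℝ) * c ^ 2) := by
          rw [Real.sqrt_mul (Nat.cast_nonneg m), Real.sqrt_sq hcnn]
      _ ≤ Real.sqrt (‖D H‖ ^ 2) := Real.sqrt_le_sqrt hlow
      _ = ‖D H‖ := Real.sqrt_sq (norm_nonneg _)
  -- conclude
  have hop : ‖D H‖ ≤ ‖D‖ := by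
    have := D.le_opNorm H
    rwa [hHnorm, mul_one] at this
  have hLHS : Real.sqrt (((m+1 : ℕ) : ℝ) - 1) /
      (1 + (((m+1 : ℕ) : ℝ) - 1) * Real.exp (-2 * R ^ 2 * |γ|)) = Real.sqrt m * P := by
    rw [abs_of_neg hγ, hPdef, hK]
    push_cast
    have hm : ((m : ℝ) + 1 - 1) = (m : ℝ) := by ring
    rw [hm]
    exact scalar_LHS_eq m R γ hγ
  calc Real.sqrt (((m+1 : ℕ) : ℝ) - 1) /
      (1 + (((m+1 : ℕ) : ℝ) - 1) * Real.exp (-2 * R ^ 2 * |γ|))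
      = Real.sqrt m * P := hLHS
    _ ≤ Real.sqrt m * c := by
        exact mul_le_mul_of_nonneg_left hPc (Real.sqrt_nonneg _)
    _ ≤ ‖D H‖ := hDHnorm
    _ ≤ ‖D‖ := hop
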